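/- Let M be a bounded multiplier on E and suppose α ∈ σ(M) with α = γ(M) for a character γ on the closed algebra 𝔖 generated by convolution operators M_φ, φ ∈ F(ℤ), and suppose M = lim M_{φ_n} in operator norm with φ_n ∈ F(ℤ). Then the symbols M̃_{φ_n} converge uniformly on U_E to a function μ_M, and γ(M) = μ_M(γ(S)); consequently σ(M) ⊂ closure of μ_M(σ(S)). -/

import Mathlib

open scoped ENNReal
open Filter

open scoped NNReal
open Pointwise

set_option synthInstance.maxHeartbeats 1000000
set_option maxHeartbeats 1000000

lemma aux_isUnit_of_mul_commute {A : Type*} [Monoid A] {a s : A}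
    (h : Commute a s) (hu : IsUnit (a * s)) : IsUnit a := by
  obtain ⟨v, hv⟩ := hu
  have hav : Commute a (v : A) := by rw [hv]; exact (Commute.refl a).mul_right h
  refine isUnit_iff_exists.mpr ⟨s * ((v⁻¹ : Aˣ) : A), ?_, ?_⟩
  · rw [← mul_assoc, ← hv, Units.mul_inv]
  · calc s * ((v⁻¹ : Aˣ) : A) * a = s * (((v⁻¹ : Aˣ) : A) * a) := mul_assoc _ _ _
      _ = s * (a * ((v⁻¹ : Aˣ) : A)) := by rw [(hav.units_inv_right).symm.eq]
      _ = s * a * ((v⁻¹ : Aˣ) : A) := (mul_assoc _ _ _).symm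
      _ = a * s * ((v⁻¹ : Aˣ) : A) := by rw [h.symm.eq]
      _ = (v : A) * ((v⁻¹ : Aˣ) : A) := by rw [← hv]
      _ = 1 := Units.mul_inv v

lemma aux_char_apply (χ : AddMonoidAlgebra ℂ ℤ →ₐ[ℂ] ℂ) (ψ : AddMonoidAlgebra ℂ ℤ) :
    χ ψ = ψ.coeff.sum fun m c => c * (χ (AddMonoidAlgebra.single (1 : ℤ) (1 : ℂ))) ^ m := by
  set s := χ (AddMonoidAlgebra.single (1 : ℤ) (1 : ℂ)) with hs
  have hmul : s * χ (AddMonoidAlgebra.single (-1 : ℤ) (1 : ℂ)) = 1 := by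
    rw [hs, ← map_mul, AddMonoidAlgebra.single_mul_single]
    norm_num [← AddMonoidAlgebra.one_def]
  have hsne : s ≠ 0 := left_ne_zero_of_mul_eq_one hmul
  have hinv : χ (AddMonoidAlgebra.single (-1 : ℤ) (1 : ℂ)) = s⁻¹ :=
    eq_inv_of_mul_eq_one_right hmul
  have hmono : ∀ m : ℤ, χ (AddMonoidAlgebra.single m (1 : ℂ)) = s ^ m := by
    intro m
    induction m using Int.induction_on with
    | zero => rw [← AddMonoidAlgebra.one_def, map_one, zpow_zero]
    | succ n ih =>
        have h1 : AddMonoidAlgebra.single ((n : ℤ) + 1) (1 : ℂ) =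
            AddMonoidAlgebra.single (n : ℤ) (1 : ℂ) * AddMonoidAlgebra.single (1 : ℤ) (1 : ℂ) := by
          rw [AddMonoidAlgebra.single_mul_single, mul_one]
        rw [h1, map_mul, ih, ← hs, zpow_add_one₀ hsne]
    | pred n ih =>
        have h1 : AddMonoidAlgebra.single (-(n : ℤ) - 1) (1 : ℂ) =
            AddMonoidAlgebra.single (-n : ℤ) (1 : ℂ) * AddMonoidAlgebra.single (-1 : ℤ) (1 : ℂ) := by
          rw [AddMonoidAlgebra.single_mul_single, mul_one]; ring_nf
        rw [h1, map_mul, ih, hinv, zpow_sub_one₀ hsne]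
  conv_lhs => rw [← AddMonoidAlgebra.sum_coeff_single ψ, map_finsuppSum]
  refine Finsupp.sum_congr fun m hm => ?_
  have h2 : AddMonoidAlgebra.single m (ψ.coeff m) = (ψ.coeff m) • AddMonoidAlgebra.single m (1 : ℂ) := by
    rw [AddMonoidAlgebra.smul_single', mul_one]
  rw [h2, map_smul, smul_eq_mul]
  congr 1
  exact hmono m

lemma aux_isUnit_sub {A : Type*} [NormedRing A] [NormedAlgebra ℂ A] [CompleteSpace A]
    (b : Aˣ) (d : A) (hcomm : Commute (b : A) d)
    (hlt : spectralRadius ℂ ((b⁻¹ : Aˣ) : A) * (‖d‖₊ : ℝ≥0∞) < 1) :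
    IsUnit ((b : A) - d) := by
  rcases eq_or_ne d 0 with rfl | hd0
  · simpa using b.isUnit
  have hdnn : (‖d‖₊ : ℝ≥0∞) ≠ 0 := by
    simpa using hd0
  have hdtop : (‖d‖₊ : ℝ≥0∞) ≠ ⊤ := ENNReal.coe_ne_top
  set R : A := ((b⁻¹ : Aˣ) : A) with hR
  have hρlt : spectralRadius ℂ R < (‖d‖₊ : ℝ≥0∞)⁻¹ := by
    by_contra hcon
    push_neg at hcon
    have h1 : (1 : ℝ≥0∞) ≤ spectralRadius ℂ R * ‖d‖₊ := by
      calc (1 : ℝ≥0∞) = (‖d‖₊ : ℝ≥0∞)⁻¹ * ‖d‖₊ := (ENNReal.inv_mul_cancel hdnn hdtop).symm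
        _ ≤ spectralRadius ℂ R * ‖d‖₊ := by exact mul_le_mul_left hcon _
    exact absurd hlt (not_lt.mpr h1)
  have hgel := spectrum.pow_nnnorm_pow_one_div_tendsto_nhds_spectralRadius R
  have hev : ∀ᶠ k : ℕ in atTop, (‖R ^ k‖₊ : ℝ≥0∞) ^ (1 / (k : ℝ)) < (‖d‖₊ : ℝ≥0∞)⁻¹ :=
    hgel.eventually_lt_const hρlt
  obtain ⟨k, hk, hk1⟩ := (hev.and (eventually_ge_atTop 1)).exists
  have hk0 : 0 < k := hk1
  have hkR : (0:ℝ) < (k:ℝ) := by exact_mod_cast hk0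
  -- raise to the k-th power
  have hpow : (‖R ^ k‖₊ : ℝ≥0∞) < ((‖d‖₊ : ℝ≥0∞)⁻¹) ^ (k : ℝ) := by
    have h5 := ENNReal.rpow_lt_rpow hk hkR
    rwa [← ENNReal.rpow_mul, one_div, inv_mul_cancel₀ (ne_of_gt hkR), ENNReal.rpow_one] at h5
  have hmul : (‖R ^ k‖₊ : ℝ≥0∞) * ((‖d‖₊ : ℝ≥0∞)) ^ (k:ℝ) < 1 := by
    have hne0 : ((‖d‖₊ : ℝ≥0∞)) ^ (k:ℝ) ≠ 0 := by
      simp [ENNReal.rpow_eq_zero_iff, hdnn, hkR, ENNReal.coe_ne_top]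
    have hnetop : ((‖d‖₊ : ℝ≥0∞)) ^ (k:ℝ) ≠ ⊤ := by
      simp [ENNReal.rpow_eq_top_iff, hdnn, hkR, ENNReal.coe_ne_top]
    calc (‖R ^ k‖₊ : ℝ≥0∞) * ((‖d‖₊ : ℝ≥0∞)) ^ (k:ℝ)
        < ((‖d‖₊ : ℝ≥0∞)⁻¹) ^ (k : ℝ) * ((‖d‖₊ : ℝ≥0∞)) ^ (k:ℝ) :=
          ENNReal.mul_lt_mul_left hne0 hnetop hpow
      _ = 1 := by
          rw [ENNReal.inv_rpow, ENNReal.inv_mul_cancel hne0 hnetop]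
  -- translate to a real-norm bound
  have hnormlt : ‖(R * d) ^ k‖ < 1 := by
    have hcomm' : Commute R d := hcomm.units_inv_left
    have h1 : ‖(R * d) ^ k‖₊ ≤ ‖R ^ k‖₊ * ‖d‖₊ ^ k := by
      rw [hcomm'.mul_pow]
      exact (nnnorm_mul_le _ _).trans (mul_le_mul_right (nnnorm_pow_le' d hk1) _)
    have h2 : (‖(R * d) ^ k‖₊ : ℝ≥0∞) < 1 := by
      refine lt_of_le_of_lt ?_ hmul
      have h6 : (‖(R * d) ^ k‖₊ : ℝ≥0∞) ≤ ((‖R ^ k‖₊ * ‖d‖₊ ^ k : ℝ≥0) : ℝ≥0∞) := by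
        exact_mod_cast h1
      refine h6.trans (le_of_eq ?_)
      rw [ENNReal.coe_mul, ENNReal.coe_pow, ENNReal.rpow_natCast]
    have := ENNReal.coe_lt_one_iff.mp h2
    exact_mod_cast this
  set x : A := R * d with hx
  have hxk : IsUnit (1 - x ^ k) := (Units.oneSub (x ^ k) hnormlt).isUnit
  set S : A := ∑ i ∈ Finset.range k, x ^ i with hS
  have hxS : Commute x S := Commute.sum_right _ _ _ fun i _ => (Commute.refl x).pow_right i
  have hC : Commute (1 - x) S := Commute.sub_left (Commute.one_left S) hxS
  have hgeom : (1 - x) * S = 1 - x ^ k := by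
    have h1 := geom_sum_mul x k
    have h2 : S * (1 - x) = 1 - x ^ k := by
      have h3 : S * (x - 1) = x ^ k - 1 := h1
      have h4 := congrArg Neg.neg h3
      simp only [← mul_neg, neg_sub] at h4
      exact h4
    rw [hC.eq, h2]
  have hunit : IsUnit (1 - x) := aux_isUnit_of_mul_commute hC (hgeom ▸ hxk)
  have hfinal : (b : A) - d = (b : A) * (1 - x) := by
    rw [mul_sub, mul_one, hx, hR, ← mul_assoc]
    simp
  rw [hfinal]
  exact b.isUnit.mul hunit

section AuxSpectralMapping
open Polynomial

lemma aux_spectral_mapping {A : Type*} [Ring A] [Algebra ℂ A]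
    (Mop : AddMonoidAlgebra ℂ ℤ →ₐ[ℂ] A) (ψ : AddMonoidAlgebra ℂ ℤ)
    (hT : IsUnit (Mop (AddMonoidAlgebra.single (1 : ℤ) (1 : ℂ))))
    (hne : (spectrum ℂ (Mop (AddMonoidAlgebra.single (1 : ℤ) (1 : ℂ)))).Nonempty)
    {l : ℂ} (hl : l ∈ spectrum ℂ (Mop ψ)) :
    ∃ w ∈ spectrum ℂ (Mop (AddMonoidAlgebra.single (1 : ℤ) (1 : ℂ))),
      l = ψ.coeff.sum fun m c => c * w ^ m := by
  set T : A := Mop (AddMonoidAlgebra.single (1 : ℤ) (1 : ℂ)) with hTdef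
  set u : Aˣ := hT.unit with hudef
  have huval : (u : A) = T := hT.unit_spec
  -- Mop of singles are integer powers of the unit u
  have hMinv : Mop (AddMonoidAlgebra.single (-1 : ℤ) (1 : ℂ)) = ((u⁻¹ : Aˣ) : A) := by
    symm
    apply Units.inv_eq_of_mul_eq_one_right
    rw [huval, hTdef, ← map_mul, AddMonoidAlgebra.single_mul_single]
    norm_num [← AddMonoidAlgebra.one_def]
  have hu : ∀ m : ℤ, Mop (AddMonoidAlgebra.single m (1 : ℂ)) = ((u ^ m : Aˣ) : A) := by
    intro m
    induction m using Int.induction_on with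
    | zero => rw [← AddMonoidAlgebra.one_def, map_one, zpow_zero, Units.val_one]
    | succ n ih =>
        have h1 : AddMonoidAlgebra.single ((n : ℤ) + 1) (1 : ℂ) =
            AddMonoidAlgebra.single (n : ℤ) (1 : ℂ) * AddMonoidAlgebra.single (1 : ℤ) (1 : ℂ) := by
          rw [AddMonoidAlgebra.single_mul_single, mul_one]
        rw [h1, map_mul, ih, zpow_add_one, Units.val_mul, huval, hTdef]
    | pred n ih =>
        have h1 : AddMonoidAlgebra.single (-(n : ℤ) - 1) (1 : ℂ) =
            AddMonoidAlgebra.single (-n : ℤ) (1 : ℂ) * AddMonoidAlgebra.single (-1 : ℤ) (1 : ℂ) := by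
          rw [AddMonoidAlgebra.single_mul_single, mul_one]; ring_nf
        rw [h1, map_mul, ih, hMinv, zpow_sub_one, Units.val_mul]
  -- the shifting exponent
  set N : ℕ := ψ.coeff.support.sup fun m => (-m).toNat with hNdef
  have hNge : ∀ m ∈ ψ.coeff.support, (0 : ℤ) ≤ m + N := by
    intro m hm
    have h1 : (-m).toNat ≤ N := Finset.le_sup (f := fun m : ℤ => (-m).toNat) hm
    have h2 := Int.self_le_toNat (-m)
    omega
  have hkey : ∀ m : ℤ, (0 : ℤ) ≤ m + N →
      T ^ N * Mop (AddMonoidAlgebra.single m (1 : ℂ)) = T ^ ((m + N).toNat) := by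
    intro m hm
    rw [hu m]
    have h1 : T ^ N = ((u ^ (N : ℤ) : Aˣ) : A) := by
      rw [zpow_natCast, ← huval, Units.val_pow_eq_pow_val]
    have h2 : T ^ ((m + N).toNat) = ((u ^ (((m + N).toNat : ℕ) : ℤ) : Aˣ) : A) := by
      rw [zpow_natCast, ← huval, Units.val_pow_eq_pow_val]
    rw [h1, h2, ← Units.val_mul, ← zpow_add, Int.toNat_of_nonneg hm]
    ring_nf
  -- the polynomial q with aeval T q = T^N * Mop ψ
  set q : ℂ[X] := ψ.coeff.sum fun m c => C c * X ^ ((m + N).toNat) with hqdef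
  have hq1 : aeval T q = T ^ N * Mop ψ := by
    rw [hqdef, map_finsuppSum]
    conv_rhs => rw [← AddMonoidAlgebra.sum_coeff_single ψ, map_finsuppSum, Finsupp.mul_sum]
    refine Finsupp.sum_congr fun m hm => ?_
    have h2 : AddMonoidAlgebra.single m (ψ.coeff m) = (ψ.coeff m) • AddMonoidAlgebra.single m (1 : ℂ) := by
      rw [AddMonoidAlgebra.smul_single', mul_one]
    rw [map_mul, aeval_C, aeval_X_pow, h2, map_smul, mul_smul_comm,
      hkey m (hNge m hm), ← Algebra.smul_def]
  -- evaluation of q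
  have hq2 : ∀ w : ℂ, w ≠ 0 →
      eval w q = w ^ N * ψ.coeff.sum fun m c => c * w ^ m := by
    intro w hw
    have h1 : eval w q = ψ.coeff.sum fun m c => c * w ^ ((m + N).toNat) := by
      rw [hqdef]
      have := map_finsuppSum (Polynomial.evalRingHom w) ψ.coeff
        (fun m c => C c * X ^ ((m + N).toNat))
      simp only [coe_evalRingHom, eval_mul, eval_C, eval_pow, eval_X] at this
      exact this
    rw [h1, Finsupp.mul_sum]
    refine Finsupp.sum_congr fun m hm => ?_
    have h2 : w ^ ((m + N).toNat) = w ^ (N : ℕ) * w ^ m := by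
      rw [← zpow_natCast w ((m + N).toNat), Int.toNat_of_nonneg (hNge m hm),
        zpow_add₀ hw, zpow_natCast, mul_comm]
    rw [h2]; ring
  -- the polynomial r
  set r : ℂ[X] := C l * X ^ N - q with hrdef
  have hr : aeval T r = T ^ N * (algebraMap ℂ A l - Mop ψ) := by
    rw [hrdef, map_sub, map_mul, aeval_C, aeval_X_pow, hq1, mul_sub]
    rw [← Algebra.commutes l (T ^ N)]
  have hTN : IsUnit (T ^ N) := hT.pow N
  have hru : ¬ IsUnit (aeval T r) := by
    intro hcon
    rw [hr, ← hTN.unit_spec, Units.isUnit_units_mul] at hcon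
    exact (spectrum.mem_iff.mp hl) hcon
  have h0 : (0 : ℂ) ∈ spectrum ℂ (aeval T r) := (spectrum.zero_mem_iff ℂ).mpr hru
  rw [spectrum.map_polynomial_aeval_of_nonempty T r hne] at h0
  obtain ⟨w, hw, hev⟩ := h0
  have hw0 : w ≠ 0 := by
    rintro rfl
    exact ((spectrum.zero_mem_iff ℂ).mp hw) hT
  refine ⟨w, hw, ?_⟩
  have hev' : l * w ^ N = eval w q := by
    have : eval w r = 0 := hev
    rw [hrdef, eval_sub, eval_mul, eval_C, eval_pow, eval_X, sub_eq_zero] at this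
    exact this
  rw [hq2 w hw0] at hev'
  have hwN : (w : ℂ) ^ N ≠ 0 := pow_ne_zero N hw0
  have : w ^ N * l = w ^ N * ψ.coeff.sum fun m c => c * w ^ m := by
    rw [← hev']; ring
  exact mul_left_cancel₀ hwN this

end AuxSpectralMapping

/-- If `M = lim M_{φₙ}` in operator norm with `φₙ ∈ F(ℤ)`, and `α = γ(M)` for a character
`γ` on the closed algebra `𝔖` generated by the convolution operators, then the symbols
`M̃_{φₙ}` converge uniformly on `U_E` to a function `μ_M`, `γ(M) = μ_M(γ(S))`, and
consequently `σ(M) ⊆ closure (μ_M(σ(S)))`. -/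
theorem spectrum_subset_closure_symbol {E : Type*} [NormedAddCommGroup E] [NormedSpace ℂ E]
    [CompleteSpace E]
    (Mop : AddMonoidAlgebra ℂ ℤ →ₐ[ℂ] (E →L[ℂ] E))
    (hbound : ∀ (ψ : AddMonoidAlgebra ℂ ℤ) (z : ℂ),
      (spectralRadius ℂ (Mop (AddMonoidAlgebra.single (-1 : ℤ) (1 : ℂ))))⁻¹ ≤ (‖z‖₊ : ℝ≥0∞) →
      (‖z‖₊ : ℝ≥0∞) ≤ spectralRadius ℂ (Mop (AddMonoidAlgebra.single (1 : ℤ) (1 : ℂ))) →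
      ‖ψ.coeff.sum fun n c => c * z ^ n‖ ≤ ‖Mop ψ‖)
    (M : E →L[ℂ] E) (φ : ℕ → AddMonoidAlgebra ℂ ℤ)
    (hconv : Tendsto (fun n => ‖Mop (φ n) - M‖) atTop (nhds 0))
    (hMmem : M ∈ Mop.range.topologicalClosure)
    (hchar : ∀ β ∈ spectrum ℂ M,
      ∃ δ : WeakDual.characterSpace ℂ Mop.range.topologicalClosure, β = δ ⟨M, hMmem⟩)
    (γ : WeakDual.characterSpace ℂ Mop.range.topologicalClosure)
    (α : ℂ) (hαM : α ∈ spectrum ℂ M) (hαγ : α = γ ⟨M, hMmem⟩) :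
    ∃ μ : ℂ → ℂ,
      TendstoUniformlyOn (fun n z => (φ n).coeff.sum fun m c => c * z ^ m) μ atTop
        {z : ℂ | (spectralRadius ℂ (Mop (AddMonoidAlgebra.single (-1 : ℤ) (1 : ℂ))))⁻¹
            ≤ (‖z‖₊ : ℝ≥0∞) ∧
          (‖z‖₊ : ℝ≥0∞) ≤ spectralRadius ℂ (Mop (AddMonoidAlgebra.single (1 : ℤ) (1 : ℂ)))} ∧
      α = μ (γ ⟨Mop (AddMonoidAlgebra.single (1 : ℤ) (1 : ℂ)),
        Mop.range.le_topologicalClosure (AlgHom.mem_range_self _ _)⟩) ∧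
      spectrum ℂ M ⊆
        closure (μ '' spectrum ℂ (Mop (AddMonoidAlgebra.single (1 : ℤ) (1 : ℂ)))) := by
  rcases subsingleton_or_nontrivial E with hE | hE
  · exact absurd hαM (by
      have : Subsingleton (E →L[ℂ] E) := inferInstance
      simp [spectrum.mem_iff, isUnit_of_subsingleton])
  -- notation
  set T : E →L[ℂ] E := Mop (AddMonoidAlgebra.single (1 : ℤ) (1 : ℂ)) with hTdef
  set T' : E →L[ℂ] E := Mop (AddMonoidAlgebra.single (-1 : ℤ) (1 : ℂ)) with hT'def
  have hTT' : T * T' = 1 := by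
    rw [hTdef, hT'def, ← map_mul, AddMonoidAlgebra.single_mul_single]
    norm_num [← AddMonoidAlgebra.one_def]
  have hT'T : T' * T = 1 := by
    rw [hTdef, hT'def, ← map_mul, AddMonoidAlgebra.single_mul_single]
    norm_num [← AddMonoidAlgebra.one_def]
  have hT : IsUnit T := isUnit_iff_exists.mpr ⟨T', hTT', hT'T⟩
  set u : (E →L[ℂ] E)ˣ := hT.unit with hudef
  have huval : (u : E →L[ℂ] E) = T := hT.unit_spec
  have hT'u : T' = ((u⁻¹ : (E →L[ℂ] E)ˣ) : E →L[ℂ] E) := by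
    symm
    apply Units.inv_eq_of_mul_eq_one_right
    rw [huval]; exact hTT'
  set U : Set ℂ := {z : ℂ | (spectralRadius ℂ T')⁻¹ ≤ (‖z‖₊ : ℝ≥0∞) ∧
      (‖z‖₊ : ℝ≥0∞) ≤ spectralRadius ℂ T} with hUdef
  set f : ℕ → ℂ → ℂ := fun n z => (φ n).coeff.sum fun m c => c * z ^ m with hfdef
  set μ : ℂ → ℂ := fun z => limUnder atTop fun n => f n z with hμdef
  -- σ(T) ⊆ U
  have hσU : spectrum ℂ T ⊆ U := by
    intro z hz
    have hz0 : z ≠ 0 := by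
      rintro rfl
      exact ((spectrum.zero_mem_iff ℂ).mp hz) hT
    constructor
    · -- lower bound
      have h1 : z⁻¹ ∈ spectrum ℂ T' := by
        have h2 := (spectrum.inv_mem_iff (r := Units.mk0 z hz0) (a := u)).mp (by
          simpa [huval] using hz)
        rw [hT'u]
        simpa using h2
      have h3 : (‖z⁻¹‖₊ : ℝ≥0∞) ≤ spectralRadius ℂ T' := le_iSup₂ (α := ℝ≥0∞) z⁻¹ h1
      have h4 : ((‖z‖₊⁻¹ : ℝ≥0) : ℝ≥0∞) ≤ spectralRadius ℂ T' := by
        rwa [nnnorm_inv] at h3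
      have h5 := ENNReal.inv_le_inv' h4
      rwa [ENNReal.coe_inv (by simpa using hz0), inv_inv] at h5
    · exact le_iSup₂ (α := ℝ≥0∞) z hz
  -- difference estimate for symbols
  have hdiff : ∀ n m : ℕ, ∀ z ∈ U, ‖f n z - f m z‖ ≤ ‖Mop (φ n) - M‖ + ‖Mop (φ m) - M‖ := by
    intro n m z hz
    have h1 : f n z - f m z = (φ n - φ m).coeff.sum fun i c => c * z ^ i := by
      rw [AddMonoidAlgebra.coeff_sub, Finsupp.sum_sub_index (fun a b₁ b₂ => sub_mul b₁ b₂ (z ^ a))]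
    have h2 := hbound (φ n - φ m) z hz.1 hz.2
    rw [← h1, map_sub] at h2
    refine h2.trans ?_
    have h3 : Mop (φ n) - Mop (φ m) = (Mop (φ n) - M) - (Mop (φ m) - M) := by abel
    rw [h3]
    exact norm_sub_le _ _
  have hconv' : ∀ ε : ℝ, 0 < ε → ∃ N : ℕ, ∀ n ≥ N, ‖Mop (φ n) - M‖ < ε := by
    intro ε hε
    have := (hconv.eventually_lt_const hε)
    exact eventually_atTop.mp this
  -- pointwise convergence on U
  have hconvz : ∀ z ∈ U, Tendsto (fun n => f n z) atTop (nhds (μ z)) := by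
    intro z hz
    have hc : CauchySeq fun n => f n z := by
      rw [Metric.cauchySeq_iff']
      intro ε hε
      obtain ⟨N, hN⟩ := hconv' (ε / 2) (half_pos hε)
      refine ⟨N, fun n hn => ?_⟩
      rw [dist_eq_norm]
      calc ‖f n z - f N z‖ ≤ ‖Mop (φ n) - M‖ + ‖Mop (φ N) - M‖ := hdiff n N z hz
        _ < ε / 2 + ε / 2 := add_lt_add (hN n hn) (hN N le_rfl)
        _ = ε := add_halves ε
    obtain ⟨l, hl⟩ := cauchySeq_tendsto_of_complete hc
    have : μ z = l := hl.limUnder_eq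
    rwa [this]
  -- uniform convergence on U
  have hTU : TendstoUniformlyOn f μ atTop U := by
    rw [Metric.tendstoUniformlyOn_iff]
    intro ε hε
    obtain ⟨N, hN⟩ := hconv' (ε / 3) (by linarith)
    filter_upwards [eventually_ge_atTop N] with n hn z hz
    have h1 : ∀ m ≥ N, dist (f m z) (f n z) ≤ ε / 3 + ε / 3 := by
      intro m hm
      rw [dist_eq_norm]
      exact (hdiff m n z hz).trans (add_le_add (hN m hm).le (hN n hn).le)
    have h2 : Tendsto (fun m => dist (f m z) (f n z)) atTop
        (nhds (dist (μ z) (f n z))) := (hconvz z hz).dist tendsto_const_nhds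
    have h3 := le_of_tendsto h2 (eventually_atTop.mpr ⟨N, h1⟩)
    linarith
  refine ⟨μ, hTU, ?_, ?_⟩
  · -- α = μ (γ S)
    have hmem : ∀ x, Mop x ∈ Mop.range.topologicalClosure := fun x =>
      Mop.range.le_topologicalClosure (AlgHom.mem_range_self _ x)
    set ι : AddMonoidAlgebra ℂ ℤ →ₐ[ℂ] Mop.range.topologicalClosure :=
      Mop.codRestrict Mop.range.topologicalClosure hmem with hιdef
    set χ : AddMonoidAlgebra ℂ ℤ →ₐ[ℂ] ℂ :=
      (WeakDual.CharacterSpace.toAlgHom γ).comp ι with hχdef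
    have hγn : ∀ n, χ (φ n) = f n (χ (AddMonoidAlgebra.single (1 : ℤ) (1 : ℂ))) := fun n =>
      aux_char_apply χ (φ n)
    have h1 : Tendsto (fun n => (ι (φ n) : Mop.range.topologicalClosure)) atTop
        (nhds (⟨M, hMmem⟩ : Mop.range.topologicalClosure)) := by
      rw [tendsto_subtype_rng]
      exact tendsto_iff_norm_sub_tendsto_zero.mpr hconv
    have h2 : Tendsto (fun n => χ (φ n)) atTop (nhds (γ ⟨M, hMmem⟩)) :=
      ((map_continuous γ).tendsto _).comp h1
    have h2' : Tendsto (fun n => f n (χ (AddMonoidAlgebra.single (1 : ℤ) (1 : ℂ)))) atTop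
        (nhds (γ ⟨M, hMmem⟩)) := by
      simpa only [hγn] using h2
    have h4 : μ (χ (AddMonoidAlgebra.single (1 : ℤ) (1 : ℂ))) = γ ⟨M, hMmem⟩ :=
      h2'.limUnder_eq
    have h5 : χ (AddMonoidAlgebra.single (1 : ℤ) (1 : ℂ)) =
        γ ⟨T, Mop.range.le_topologicalClosure (AlgHom.mem_range_self _ _)⟩ := rfl
    rw [hαγ, ← h5, h4]
  · -- spectrum inclusion
    intro l hl
    by_contra hlnot
    rw [Metric.mem_closure_iff] at hlnot
    push_neg at hlnot
    obtain ⟨ε, hε, hfar0⟩ := hlnot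
    obtain ⟨n, hn1, hn2⟩ := ((Metric.tendstoUniformlyOn_iff.mp hTU (ε / 4) (by linarith)).and
      (hconv.eventually_lt_const (show (0:ℝ) < ε / 4 by linarith))).exists
    haveI : Nontrivial (E →L[ℂ] E) := ⟨1, 0, fun h => by
      obtain ⟨x, hx⟩ := exists_ne (0 : E)
      exact hx (by simpa using DFunLike.congr_fun h x)⟩
    have hnon : (spectrum ℂ T).Nonempty := spectrum.nonempty T
    have hfar : ∀ y ∈ spectrum ℂ (Mop (φ n)), ε / 2 ≤ dist l y := by
      intro y hy
      obtain ⟨w, hw, rfl⟩ := aux_spectral_mapping Mop (φ n) hT hnon hy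
      have h1 : ε ≤ dist l (μ w) := hfar0 _ ⟨w, hw, rfl⟩
      have h2 : dist (μ w) (f n w) < ε / 4 := hn1 w (hσU hw)
      have h3 := dist_triangle l (f n w) (μ w)
      rw [dist_comm (f n w) (μ w)] at h3
      have : (φ n).coeff.sum (fun m c => c * w ^ m) = f n w := rfl
      rw [this]
      linarith
    have hln : l ∉ spectrum ℂ (Mop (φ n)) := by
      intro h
      have := hfar l h
      simp only [dist_self] at this
      linarith
    have hbu : IsUnit (algebraMap ℂ (E →L[ℂ] E) l - Mop (φ n)) :=
      spectrum.notMem_iff.mp hln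
    set b : (E →L[ℂ] E)ˣ := hbu.unit with hbdef
    have hbval : (b : E →L[ℂ] E) = algebraMap ℂ (E →L[ℂ] E) l - Mop (φ n) := hbu.unit_spec
    set d : E →L[ℂ] E := M - Mop (φ n) with hddef
    -- commutation
    have hcommM : Commute (Mop (φ n)) M := by
      have hclosed : IsClosed {x : E →L[ℂ] E | Mop (φ n) * x = x * Mop (φ n)} :=
        isClosed_eq (continuous_mul_left _) (continuous_mul_right _)
      have hsub : (Mop.range : Set (E →L[ℂ] E)) ⊆
          {x : E →L[ℂ] E | Mop (φ n) * x = x * Mop (φ n)} := by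
        rintro _ ⟨ψ, rfl⟩
        show Mop (φ n) * Mop ψ = Mop ψ * Mop (φ n)
        rw [← map_mul, ← map_mul, mul_comm]
      have hMcl : M ∈ closure (Mop.range : Set (E →L[ℂ] E)) := by
        rw [← Subalgebra.topologicalClosure_coe]
        exact hMmem
      exact closure_minimal hsub hclosed hMcl
    have hcommbd : Commute (b : E →L[ℂ] E) d := by
      rw [hbval, hddef]
      have c1 : Commute (algebraMap ℂ (E →L[ℂ] E) l) M := Algebra.commute_algebraMap_left l M
      have c2 : Commute (algebraMap ℂ (E →L[ℂ] E) l) (Mop (φ n)) :=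
        Algebra.commute_algebraMap_left l _
      have c3 : Commute (Mop (φ n)) M := hcommM
      exact (c1.sub_left c3).sub_right (c2.sub_left (Commute.refl _))
    -- spectral radius bound on the inverse
    have hρ : spectralRadius ℂ ((b⁻¹ : (E →L[ℂ] E)ˣ) : E →L[ℂ] E) ≤ ENNReal.ofReal (2 / ε) := by
      refine iSup₂_le fun z hz => ?_
      rcases eq_or_ne z 0 with rfl | hz0
      · simp
      have h1 : z⁻¹ ∈ spectrum ℂ ((b : E →L[ℂ] E)) := by
        have h2 := (spectrum.inv_mem_iff (r := Units.mk0 z hz0) (a := b⁻¹)).mp (by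
          simpa using hz)
        simpa using h2
      rw [hbval] at h1
      have h3 : z⁻¹ ∈ ({l} : Set ℂ) - spectrum ℂ (Mop (φ n)) := by
        rwa [spectrum.singleton_sub_eq]
      rw [Set.mem_sub] at h3
      obtain ⟨a, ha, y, hy, hay⟩ := h3
      rw [Set.mem_singleton_iff] at ha
      subst ha
      have h4 := hfar y hy
      rw [dist_eq_norm] at h4
      have h5 : ‖z⁻¹‖ = ‖a - y‖ := by rw [← hay]
      have h6 : ε / 2 ≤ ‖z‖⁻¹ := by
        rw [← norm_inv, h5]; exact h4
      have h8 : (0:ℝ) < ‖z‖ := norm_pos_iff.mpr hz0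
      have h7 : ‖z‖ ≤ 2 / ε := by
        have h11 : ‖z‖ * (ε / 2) ≤ 1 := by
          calc ‖z‖ * (ε / 2) ≤ ‖z‖ * ‖z‖⁻¹ := mul_le_mul_of_nonneg_left h6 h8.le
            _ = 1 := mul_inv_cancel₀ (ne_of_gt h8)
        rw [le_div_iff₀ hε]
        nlinarith
      rw [← enorm_eq_nnnorm, ← ofReal_norm]
      exact ENNReal.ofReal_le_ofReal h7
    have hdn : ‖d‖ < ε / 4 := by
      rw [hddef, norm_sub_rev]
      exact hn2
    have hlt : spectralRadius ℂ ((b⁻¹ : (E →L[ℂ] E)ˣ) : E →L[ℂ] E) * (‖d‖₊ : ℝ≥0∞) < 1 := by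
      have hd4 : (‖d‖₊ : ℝ≥0∞) ≤ ENNReal.ofReal (ε / 4) := by
        rw [← enorm_eq_nnnorm, ← ofReal_norm]
        exact ENNReal.ofReal_le_ofReal hdn.le
      calc spectralRadius ℂ ((b⁻¹ : (E →L[ℂ] E)ˣ) : E →L[ℂ] E) * (‖d‖₊ : ℝ≥0∞)
          ≤ ENNReal.ofReal (2 / ε) * ENNReal.ofReal (ε / 4) := mul_le_mul' hρ hd4
        _ = ENNReal.ofReal ((2 / ε) * (ε / 4)) := (ENNReal.ofReal_mul (by positivity)).symm
        _ = ENNReal.ofReal (1 / 2) := by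
            congr 1
            field_simp
            norm_num
        _ < 1 := by
            rw [show (1 : ℝ≥0∞) = ENNReal.ofReal 1 by simp]
            exact ENNReal.ofReal_lt_ofReal_iff_of_nonneg (by norm_num) |>.mpr (by norm_num)
    have hfin := aux_isUnit_sub b d hcommbd hlt
    have heq : (b : E →L[ℂ] E) - d = algebraMap ℂ (E →L[ℂ] E) l - M := by
      rw [hbval, hddef]
      abel
    rw [heq] at hfin
    exact (spectrum.mem_iff.mp hl) hfin
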